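/- Let X ∈ ℝ^{n×n} be any matrix and let 0 < ε < 1. Set r = ⌈72·log(2n+1)/ε²⌉ (natural logarithm). Then there exists a matrix Y ∈ ℝ^{n×n} with rank(Y) ≤ r such that ‖X − Y‖_max ≤ ε·‖X‖₂. -/

import Mathlib

open Real MeasureTheory Finset Matrix

set_option linter.unusedSectionVars false
set_option linter.unusedVariables false
set_option maxHeartbeats 1000000

/-- The spectral norm (largest singular value) of a real square matrix, realized as the
operator norm of the associated linear map on Euclidean space. -/
noncomputable def matrixSpectralNorm (n : ℕ) (X : Matrix (Fin n) (Fin n) ℝ) : ℝ :=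
  ‖Matrix.toEuclideanCLM (𝕜 := ℝ) X‖

namespace LowRankAux

-- numeric exp inequalities
lemma exp_ge_quad {v : ℝ} (hv : 0 ≤ v) : (1 + v/2)^2 ≤ exp v := by
  have h := Real.add_one_le_exp (v/2)
  have h2 : (0:ℝ) ≤ 1 + v/2 := by linarith
  calc (1+v/2)^2 ≤ (exp (v/2))^2 := by nlinarith [h]
  _ = exp v := by rw [← Real.exp_nat_mul]; ring_nf

lemma exp_ge_cubic {v : ℝ} (hv : 0 ≤ v) : 1 + v + v^2/3 ≤ exp v := by
  have h := Real.add_one_le_exp (v/3)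
  have h2 : (0:ℝ) ≤ 1 + v/3 := by linarith
  have h3 : (1+v/3)^3 ≤ (exp (v/3))^3 := by
    apply pow_le_pow_left₀ h2 (by linarith)
  have h4 : (exp (v/3))^3 = exp v := by rw [← Real.exp_nat_mul]; ring_nf
  nlinarith [h3, h4]

lemma exp_neg_le_quad {v : ℝ} (hv : 0 ≤ v) : exp (-v) ≤ 1 - v + (3/4)*v^2 := by
  have h1 := exp_ge_quad hv
  have h2 : (0:ℝ) < (1 + v/2)^2 := by positivity
  have h3 : exp (-v) ≤ ((1 + v/2)^2)⁻¹ := by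
    rw [Real.exp_neg]
    exact inv_anti₀ h2 h1
  have h4 : ((1 + v/2)^2)⁻¹ ≤ 1 - v + (3/4)*v^2 := by
    rw [inv_le_iff_one_le_mul₀ h2]
    nlinarith [sq_nonneg v, sq_nonneg (v*v)]
  linarith

lemma one_le_mul_exp {u : ℝ} (h0 : 0 ≤ u) (h1 : u ≤ 1/5) : 1 ≤ (1-u) * exp (u + u^2) := by
  have hv : (0:ℝ) ≤ u + u^2 := by nlinarith
  have h2 := exp_ge_quad hv
  have h3 : (0:ℝ) < 1 - u := by linarith
  have h4 := mul_le_mul_of_nonneg_left h2 h3.le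
  nlinarith [h4, sq_nonneg u, sq_nonneg (u*u), sq_nonneg (u*(1-u))]

lemma exp_0_12_le : exp (3/25) ≤ 25/22 := by
  have h := Real.add_one_le_exp (-(3/25) : ℝ)
  have h2 : (0:ℝ) < exp (-(3/25)) := Real.exp_pos _
  have h3 : (22/25 : ℝ) ≤ exp (-(3/25)) := by linarith
  have h4 : exp (3/25) * (22/25) ≤ exp (3/25) * exp (-(3/25)) :=
    mul_le_mul_of_nonneg_left h3 (Real.exp_pos _).le
  rw [← Real.exp_add] at h4
  norm_num at h4
  linarith


theorem gauss_complete_sq (b a : ℝ) (hb : 0 < b) :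
    ∫ x : ℝ, exp (-b*x^2 + a*x) = sqrt (π / b) * exp (a^2/(4*b)) := by
  have h1 : ∀ x : ℝ, -b*x^2 + a*x = -b*(x + (-(a/(2*b))))^2 + a^2/(4*b) := by
    intro x; field_simp; ring
  simp_rw [h1, Real.exp_add, integral_mul_const]
  rw [integral_add_right_eq_self (fun y : ℝ => exp (-b*y^2)) (-(a/(2*b))), integral_gaussian]

theorem integrable_gauss_lin (b a : ℝ) (hb : 0 < b) :
    Integrable (fun x : ℝ => exp (-b*x^2 + a*x)) := by
  have h1 : ∀ x : ℝ, -b*x^2 + a*x = -b*(x + (-(a/(2*b))))^2 + a^2/(4*b) := by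
    intro x; field_simp; ring
  simp_rw [h1, Real.exp_add]
  exact (((integrable_exp_neg_mul_sq hb).comp_add_right (-(a/(2*b))))).mul_const _


variable {ι : Type*} [Fintype ι] [DecidableEq ι] {κ : Type*} [Fintype κ] [DecidableEq κ]

noncomputable def sgn (b : Bool) : ℝ := if b then 1 else -1

lemma sgn_mul_self (b : Bool) : sgn b * sgn b = 1 := by cases b <;> simp [sgn]


noncomputable def Z (x : ι → ℝ) (s : ι → Bool) : ℝ := ∑ i, sgn (s i) * x i

lemma Z_add (x y : ι → ℝ) (s : ι → Bool) : Z (x + y) s = Z x s + Z y s := by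
  simp [Z, mul_add, Finset.sum_add_distrib]

lemma Z_sub (x y : ι → ℝ) (s : ι → Bool) : Z (x - y) s = Z x s - Z y s := by
  simp [Z, mul_sub, Finset.sum_sub_distrib]

lemma Z_smul (c : ℝ) (x : ι → ℝ) (s : ι → Bool) : Z (c • x) s = c * Z x s := by
  simp only [Z, Pi.smul_apply, smul_eq_mul, Finset.mul_sum]
  exact Finset.sum_congr rfl fun i _ => by ring

/-- Sum over sign vectors of a product over coordinates factorizes. -/
lemma sum_prod_signs (g : ι → Bool → ℝ) :
    ∑ s : ι → Bool, ∏ i, g i (s i) = ∏ i, (g i true + g i false) := by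
  rw [show (∑ s : ι → Bool, ∏ i, g i (s i)) =
      ∑ s ∈ Fintype.piFinset (fun _ : ι => (Finset.univ : Finset Bool)), ∏ i, g i (s i) by
    rw [Fintype.piFinset_univ]]
  rw [← Finset.prod_univ_sum]
  exact Finset.prod_congr rfl fun i _ => by simp [Fintype.sum_bool]

lemma sum_exp_Z (t : ℝ) (x : ι → ℝ) :
    ∑ s : ι → Bool, exp (t * Z x s) = ∏ i, (exp (t * x i) + exp (-(t * x i))) := by
  have h1 : ∀ s : ι → Bool, exp (t * Z x s) = ∏ i, exp (t * (sgn (s i) * x i)) := by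
    intro s; rw [← Real.exp_sum, Z, Finset.mul_sum]
  simp_rw [h1]
  rw [sum_prod_signs (fun i b => exp (t * (sgn b * x i)))]
  refine Finset.prod_congr rfl fun i _ => ?_
  simp only [sgn, if_true, if_false]
  norm_num

/-- mgf bound for a Rademacher linear combination. -/
lemma sum_exp_Z_le (t : ℝ) (x : ι → ℝ) :
    ∑ s : ι → Bool, exp (t * Z x s) ≤
      2 ^ (Fintype.card ι) * exp (t^2 * (∑ i, x i^2) / 2) := by
  rw [sum_exp_Z]
  calc ∏ i, (exp (t * x i) + exp (-(t * x i)))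
      ≤ ∏ i, 2 * exp ((t * x i)^2/2) := by
        apply Finset.prod_le_prod
        · intro i _; positivity
        · intro i _
          have := Real.cosh_le_exp_half_sq (t * x i)
          rw [Real.cosh_eq] at this
          linarith
    _ = 2 ^ (Fintype.card ι) * exp (t^2 * (∑ i, x i^2) / 2) := by
        rw [Finset.prod_mul_distrib, Finset.prod_const, ← Real.exp_sum]
        have hs : ∑ i, (t * x i)^2/2 = t^2 * (∑ i, x i^2) / 2 := by
          rw [← Finset.sum_div, Finset.mul_sum]
          congr 1
          exact Finset.sum_congr rfl fun i _ => by ring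
        rw [hs, Finset.card_univ]

/-- second moment identity -/
lemma sum_sgn_mul_sgn (i j : ι) :
    ∑ s : ι → Bool, sgn (s i) * sgn (s j) =
      if i = j then (2:ℝ) ^ (Fintype.card ι) else 0 := by
  have key : ∀ s : ι → Bool, sgn (s i) * sgn (s j) =
      ∏ k, ((if k = i then sgn (s k) else 1) * (if k = j then sgn (s k) else 1)) := by
    intro s
    rw [Finset.prod_mul_distrib, Finset.prod_ite_eq' Finset.univ i (fun k => sgn (s k)),
      Finset.prod_ite_eq' Finset.univ j (fun k => sgn (s k))]
    simp
  simp_rw [key]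
  rw [sum_prod_signs (fun k b => (if k = i then sgn b else 1) * (if k = j then sgn b else 1))]
  by_cases hij : i = j
  · subst hij
    rw [if_pos rfl]
    have hfac : ∀ k : ι, ((if k = i then sgn true else 1) * (if k = i then sgn true else 1)
        + (if k = i then sgn false else 1) * (if k = i then sgn false else 1)) = (2:ℝ) := by
      intro k; by_cases hk : k = i <;> simp [hk, sgn] <;> norm_num
    calc ∏ k : ι, ((if k = i then sgn true else 1) * (if k = i then sgn true else 1)
        + (if k = i then sgn false else 1) * (if k = i then sgn false else 1))
        = ∏ _k : ι, (2:ℝ) := Finset.prod_congr rfl fun k _ => hfac k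
      _ = 2 ^ Fintype.card ι := by rw [Finset.prod_const, Finset.card_univ]
  · rw [if_neg hij]
    apply Finset.prod_eq_zero (Finset.mem_univ i)
    simp [hij, sgn, if_neg (Ne.symm hij)]

lemma sum_Z_sq (x : ι → ℝ) :
    ∑ s : ι → Bool, (Z x s)^2 = 2 ^ (Fintype.card ι) * ∑ i, x i^2 := by
  have h1 : ∀ s : ι → Bool, (Z x s)^2 =
      ∑ i, ∑ j, (sgn (s i) * sgn (s j)) * (x i * x j) := by
    intro s
    rw [sq, Z, Finset.sum_mul_sum]
    exact Finset.sum_congr rfl fun i _ => Finset.sum_congr rfl fun j _ => by ring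
  simp_rw [h1]
  rw [Finset.sum_comm]
  have h2 : ∀ i : ι, ∑ s : ι → Bool, ∑ j, (sgn (s i) * sgn (s j)) * (x i * x j)
      = 2 ^ (Fintype.card ι) * x i ^ 2 := by
    intro i
    rw [Finset.sum_comm]
    have h3 : ∀ j, ∑ s : ι → Bool, (sgn (s i) * sgn (s j)) * (x i * x j)
        = (if i = j then (2:ℝ) ^ (Fintype.card ι) else 0) * (x i * x j) := by
      intro j
      rw [← Finset.sum_mul, sum_sgn_mul_sgn]
    simp_rw [h3]
    simp [Finset.sum_ite_eq, sq]
  simp_rw [h2]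
  rw [← Finset.mul_sum]


theorem sum_exp_sq_le (x : ι → ℝ) (hx : ∑ i, x i^2 = 1) {l : ℝ} (h0 : 0 ≤ l) (h1 : l ≤ 1/10) :
    ∑ s : ι → Bool, exp (l * (Z x s)^2) ≤ 2 ^ (Fintype.card ι) * exp (l + 2*l^2) := by
  set t := Real.sqrt (2*l) with htdef
  have ht2 : t^2 = 2*l := Real.sq_sqrt (by linarith)
  have hC : (0:ℝ) < sqrt (π / (1/2)) := by
    apply Real.sqrt_pos.mpr; positivity
  -- step 1: pointwise Gaussian representation
  have hrep : ∀ s : ι → Bool, exp (l * (Z x s)^2) =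
      (sqrt (π/(1/2)))⁻¹ * ∫ g : ℝ, exp (-(1/2)*g^2 + (t * Z x s)*g) := by
    intro s
    rw [gauss_complete_sq (1/2) (t * Z x s) (by norm_num)]
    rw [show (t * Z x s)^2/(4*(1/2)) = l * (Z x s)^2 by rw [mul_pow, ht2]; ring]
    field_simp
  simp_rw [hrep]
  rw [← Finset.mul_sum]
  -- step 2: swap sum and integral
  have hint : ∀ s : ι → Bool, Integrable (fun g : ℝ => exp (-(1/2)*g^2 + (t * Z x s)*g)) := by
    intro s
    have := integrable_gauss_lin (1/2) (t * Z x s) (by norm_num)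
    simpa using this
  rw [show (∑ s : ι → Bool, ∫ g : ℝ, exp (-(1/2)*g^2 + (t * Z x s)*g))
      = ∫ g : ℝ, ∑ s : ι → Bool, exp (-(1/2)*g^2 + (t * Z x s)*g) from
    (integral_finset_sum Finset.univ (fun s _ => hint s)).symm]
  -- step 3: pointwise bound on the inner sum
  have hptw : ∀ g : ℝ, ∑ s : ι → Bool, exp (-(1/2)*g^2 + (t * Z x s)*g)
      ≤ (2:ℝ) ^ (Fintype.card ι) * exp (-(1/2 - l)*g^2) := by
    intro g
    have h5 : ∀ s : ι → Bool, exp (-(1/2)*g^2 + (t * Z x s)*g)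
        = exp (-(1/2)*g^2) * exp ((t*g) * Z x s) := by
      intro s; rw [← Real.exp_add]; ring_nf
    simp_rw [h5]
    rw [← Finset.mul_sum]
    have h6 := sum_exp_Z_le (ι := ι) (t*g) x
    rw [hx, mul_one] at h6
    calc exp (-(1/2)*g^2) * ∑ s : ι → Bool, exp ((t*g) * Z x s)
        ≤ exp (-(1/2)*g^2) * (2 ^ (Fintype.card ι) * exp ((t*g)^2/2)) := by
          apply mul_le_mul_of_nonneg_left h6 (Real.exp_pos _).le
      _ = (2:ℝ) ^ (Fintype.card ι) * exp (-(1/2 - l)*g^2) := by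
          rw [mul_comm (exp (-(1/2)*g^2)), mul_assoc, ← Real.exp_add]
          congr 2
          rw [mul_pow, ht2]; ring
  -- step 4: integrate the bound
  have hb2 : (0:ℝ) < 1/2 - l := by linarith
  have hintR : Integrable (fun g : ℝ => (2:ℝ) ^ (Fintype.card ι) * exp (-(1/2 - l)*g^2)) := by
    exact (integrable_exp_neg_mul_sq hb2).const_mul _
  have hintL : Integrable (fun g : ℝ => ∑ s : ι → Bool, exp (-(1/2)*g^2 + (t * Z x s)*g)) :=
    integrable_finset_sum Finset.univ (fun s _ => hint s)
  have hmono := integral_mono hintL hintR hptw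
  rw [integral_const_mul, integral_gaussian] at hmono
  have hfinal : (sqrt (π/(1/2)))⁻¹ * ((2:ℝ) ^ (Fintype.card ι) * sqrt (π / (1/2 - l)))
      ≤ 2 ^ (Fintype.card ι) * exp (l + 2*l^2) := by
    rw [← mul_assoc, mul_comm (sqrt (π/(1/2)))⁻¹, mul_assoc]
    apply mul_le_mul_of_nonneg_left _ (by positivity)
    -- √(π/(1/2))⁻¹ * √(π/(1/2-l)) ≤ exp (l+2l²)
    have hq : (sqrt (π/(1/2)))⁻¹ * sqrt (π / (1/2 - l)) = sqrt ((1/2) / (1/2 - l)) := by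
      rw [← Real.sqrt_inv, ← Real.sqrt_mul (by positivity)]
      congr 1
      field_simp
    rw [hq]
    have hsq : (1/2) / (1/2 - l) ≤ (exp (l + 2*l^2))^2 := by
      have he2 : (exp (l + 2*l^2))^2 = exp (2*l + (2*l)^2) := by
        rw [sq, ← Real.exp_add]; ring_nf
      rw [he2, div_le_iff₀ hb2]
      have hu := one_le_mul_exp (u := 2*l) (by linarith) (by linarith)
      nlinarith [hu, Real.exp_pos (2*l + (2*l)^2)]
    calc sqrt ((1/2)/(1/2-l)) ≤ sqrt ((exp (l + 2*l^2))^2) := Real.sqrt_le_sqrt hsq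
      _ = exp (l + 2*l^2) := Real.sqrt_sq (Real.exp_pos _).le
  calc (sqrt (π/(1/2)))⁻¹ * ∫ g : ℝ, ∑ s : ι → Bool, exp (-(1/2)*g^2 + (t * Z x s)*g)
      ≤ (sqrt (π/(1/2)))⁻¹ * ((2:ℝ) ^ (Fintype.card ι) * sqrt (π / (1/2 - l))) := by
        apply mul_le_mul_of_nonneg_left _ (by positivity)
        exact hmono
    _ ≤ 2 ^ (Fintype.card ι) * exp (l + 2*l^2) := hfinal


theorem sum_Z_pow4 (x : ι → ℝ) (hx : ∑ i, x i^2 = 1) :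
    ∑ s : ι → Bool, (Z x s)^4 ≤ 11 * 2 ^ (Fintype.card ι) := by
  have h1 := sum_exp_sq_le x hx (l := 1/10) (by norm_num) (le_refl _)
  have h2 : ∀ s : ι → Bool, 1 + (1/10) * (Z x s)^2 + ((1/10) * (Z x s)^2)^2/3
      ≤ exp ((1/10) * (Z x s)^2) := fun s => exp_ge_cubic (by positivity)
  have h3 : ∑ s : ι → Bool, (1 + (1/10) * (Z x s)^2 + ((1/10) * (Z x s)^2)^2/3)
      ≤ ∑ s : ι → Bool, exp ((1/10) * (Z x s)^2) := Finset.sum_le_sum (fun s _ => h2 s)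
  have h4 : ∑ s : ι → Bool, (1 + (1/10) * (Z x s)^2 + ((1/10) * (Z x s)^2)^2/3)
      = 2 ^ (Fintype.card ι) * (1 + 1/10) + (1/300) * ∑ s : ι → Bool, (Z x s)^4 := by
    rw [Finset.sum_add_distrib, Finset.sum_add_distrib, Finset.sum_const, ← Finset.mul_sum,
      sum_Z_sq x, hx]
    have : ∀ s : ι → Bool, ((1/10) * (Z x s)^2)^2/3 = (1/300) * (Z x s)^4 := by
      intro s; ring
    simp_rw [this]
    rw [← Finset.mul_sum]
    simp [Fintype.card_fun, Finset.card_univ]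
    ring
  have h5 : (2:ℝ) ^ (Fintype.card ι) * exp (1/10 + 2*(1/10)^2)
      ≤ 2 ^ (Fintype.card ι) * (25/22) := by
    apply mul_le_mul_of_nonneg_left _ (by positivity)
    calc exp (1/10 + 2*(1/10)^2) = exp (3/25) := by norm_num
    _ ≤ 25/22 := exp_0_12_le
  have h6 : (1/300 : ℝ) * ∑ s : ι → Bool, (Z x s)^4
      ≤ 2 ^ (Fintype.card ι) * (25/22) - 2 ^ (Fintype.card ι) * (1 + 1/10) := by
    linarith [h3, h4, h1, h5]
  have hp : (0:ℝ) ≤ 2 ^ (Fintype.card ι) := by positivity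
  nlinarith [h6, hp]

theorem sum_exp_neg_sq_le (x : ι → ℝ) (hx : ∑ i, x i^2 = 1) {l : ℝ} (h0 : 0 ≤ l) :
    ∑ s : ι → Bool, exp (-(l * (Z x s)^2)) ≤ 2 ^ (Fintype.card ι) * exp (-l + (33/4)*l^2) := by
  have h2 : ∀ s : ι → Bool, exp (-(l * (Z x s)^2)) ≤
      1 - l * (Z x s)^2 + (3/4) * (l * (Z x s)^2)^2 := fun s => exp_neg_le_quad (by positivity)
  have h3 := Finset.sum_le_sum (fun s (_ : s ∈ Finset.univ) => h2 s)
  have h4 : ∑ s : ι → Bool, (1 - l * (Z x s)^2 + (3/4) * (l * (Z x s)^2)^2)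
      = 2 ^ (Fintype.card ι) * (1 - l) + (3/4) * l^2 * ∑ s : ι → Bool, (Z x s)^4 := by
    rw [Finset.sum_add_distrib, Finset.sum_sub_distrib, Finset.sum_const, ← Finset.mul_sum,
      sum_Z_sq x, hx]
    have : ∀ s : ι → Bool, (3/4) * (l * (Z x s)^2)^2 = (3/4) * l^2 * (Z x s)^4 := by
      intro s; ring
    simp_rw [this]
    rw [← Finset.mul_sum]
    simp [Fintype.card_fun, Finset.card_univ]
    ring
  have h5 := sum_Z_pow4 x hx
  have h6 : ∑ s : ι → Bool, exp (-(l * (Z x s)^2))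
      ≤ 2 ^ (Fintype.card ι) * (1 - l + (33/4)*l^2) := by
    have hl2 : (0:ℝ) ≤ (3/4) * l^2 := by positivity
    nlinarith [h3, h4, h5, mul_le_mul_of_nonneg_left h5 hl2]
  calc ∑ s : ι → Bool, exp (-(l * (Z x s)^2)) ≤ 2 ^ (Fintype.card ι) * (1 - l + (33/4)*l^2) := h6
    _ ≤ 2 ^ (Fintype.card ι) * exp (-l + (33/4)*l^2) := by
        apply mul_le_mul_of_nonneg_left _ (by positivity)
        calc 1 - l + (33/4)*l^2 = 1 + (-l + (33/4)*l^2) := by ring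
        _ ≤ exp (-l + (33/4)*l^2) := by linarith [Real.add_one_le_exp (-l + (33/4)*l^2)]


lemma sum_prod_pow (g : (ι → Bool) → ℝ) :
    ∑ S : κ → ι → Bool, ∏ k : κ, g (S k) = (∑ s : ι → Bool, g s) ^ (Fintype.card κ) := by
  rw [show (∑ S : κ → ι → Bool, ∏ k : κ, g (S k)) =
      ∑ S ∈ Fintype.piFinset (fun _ : κ => (Finset.univ : Finset (ι → Bool))), ∏ k : κ, g (S k) by
    rw [Fintype.piFinset_univ]]
  rw [← Finset.prod_univ_sum]
  rw [Finset.prod_const, Finset.card_univ]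

lemma card_fun_bool : ((Fintype.card (κ → ι → Bool) : ℝ))
    = ((2:ℝ) ^ (Fintype.card ι)) ^ (Fintype.card κ) := by
  rw [Fintype.card_fun, Fintype.card_fun, Fintype.card_bool]
  push_cast
  ring

theorem chernoff_upper (x : ι → ℝ) (hx : ∑ i, x i^2 = 1) {ε : ℝ} (hε0 : 0 < ε) (hε1 : ε < 1) :
    ((Finset.univ.filter (fun S : κ → ι → Bool =>
        (Fintype.card κ : ℝ)*(1+ε) ≤ ∑ k : κ, (Z x (S k))^2)).card : ℝ)
      ≤ exp (-((Fintype.card κ : ℝ) * ε^2)/36) * ((2:ℝ)^(Fintype.card ι))^(Fintype.card κ) := by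
  set ρ := (Fintype.card κ : ℝ)
  set l := ε/12 with hl
  have hl0 : 0 ≤ l := by positivity
  have hρ : 0 ≤ ρ := Nat.cast_nonneg _
  set B := Finset.univ.filter (fun S : κ → ι → Bool =>
        ρ*(1+ε) ≤ ∑ k : κ, (Z x (S k))^2) with hB
  have step1 : (B.card : ℝ) ≤ ∑ S ∈ B, exp (l * ((∑ k : κ, (Z x (S k))^2) - ρ*(1+ε))) := by
    have hcard : (B.card : ℝ) = ∑ _S ∈ B, (1:ℝ) := by simp
    rw [hcard]
    apply Finset.sum_le_sum
    intro S hS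
    rw [hB, Finset.mem_filter] at hS
    have harg : 0 ≤ l * ((∑ k : κ, (Z x (S k))^2) - ρ*(1+ε)) := by
      apply mul_nonneg hl0; linarith [hS.2]
    calc (1:ℝ) = exp 0 := by rw [Real.exp_zero]
    _ ≤ _ := Real.exp_le_exp.mpr harg
  have step2 : ∑ S ∈ B, exp (l * ((∑ k : κ, (Z x (S k))^2) - ρ*(1+ε)))
      ≤ ∑ S : κ → ι → Bool, exp (l * ((∑ k : κ, (Z x (S k))^2) - ρ*(1+ε))) := by
    apply Finset.sum_le_sum_of_subset_of_nonneg (Finset.filter_subset _ _)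
    intro S _ _; exact (Real.exp_pos _).le
  have step3 : ∑ S : κ → ι → Bool, exp (l * ((∑ k : κ, (Z x (S k))^2) - ρ*(1+ε)))
      = exp (-(l * ρ*(1+ε))) * (∑ s : ι → Bool, exp (l * (Z x s)^2)) ^ (Fintype.card κ) := by
    have h1 : ∀ S : κ → ι → Bool, exp (l * ((∑ k : κ, (Z x (S k))^2) - ρ*(1+ε)))
        = exp (-(l * ρ*(1+ε))) * ∏ k : κ, exp (l * (Z x (S k))^2) := by
      intro S
      rw [← Real.exp_sum, ← Real.exp_add]
      congr 1
      rw [← Finset.mul_sum]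
      ring
    simp_rw [h1]
    rw [← Finset.mul_sum, sum_prod_pow (fun s => exp (l * (Z x s)^2))]
  have step4 : (∑ s : ι → Bool, exp (l * (Z x s)^2)) ^ (Fintype.card κ)
      ≤ ((2:ℝ) ^ (Fintype.card ι) * exp (l + 2*l^2)) ^ (Fintype.card κ) := by
    apply pow_le_pow_left₀ (Finset.sum_nonneg (fun s _ => (Real.exp_pos _).le))
    exact sum_exp_sq_le x hx hl0 (by rw [hl]; linarith)
  have step5 : exp (-(l * ρ*(1+ε))) * ((2:ℝ) ^ (Fintype.card ι) * exp (l + 2*l^2)) ^ (Fintype.card κ)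
      ≤ exp (-(ρ * ε^2)/36) * ((2:ℝ)^(Fintype.card ι))^(Fintype.card κ) := by
    rw [mul_pow, ← Real.exp_nat_mul]
    rw [mul_comm (exp (-(l * ρ*(1+ε)))), mul_assoc, ← Real.exp_add,
        mul_comm (exp (-(ρ * ε^2)/36))]
    apply mul_le_mul_of_nonneg_left _ (by positivity)
    apply Real.exp_le_exp.mpr
    have : (Fintype.card κ : ℝ) = ρ := rfl
    rw [this, hl]
    nlinarith [hρ, sq_nonneg ε, mul_nonneg hρ (sq_nonneg ε)]
  calc (B.card : ℝ) ≤ _ := step1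
  _ ≤ _ := step2
  _ = _ := step3
  _ ≤ exp (-(l * ρ*(1+ε))) * ((2:ℝ) ^ (Fintype.card ι) * exp (l + 2*l^2)) ^ (Fintype.card κ) := by
      apply mul_le_mul_of_nonneg_left step4 (Real.exp_pos _).le
  _ ≤ _ := step5


theorem chernoff_lower (x : ι → ℝ) (hx : ∑ i, x i^2 = 1) {ε : ℝ} (hε0 : 0 < ε) (hε1 : ε < 1) :
    ((Finset.univ.filter (fun S : κ → ι → Bool =>
        (∑ k : κ, (Z x (S k))^2) ≤ (Fintype.card κ : ℝ)*(1-ε))).card : ℝ)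
      ≤ exp (-((Fintype.card κ : ℝ) * ε^2)/36) * ((2:ℝ)^(Fintype.card ι))^(Fintype.card κ) := by
  set ρ := (Fintype.card κ : ℝ)
  set l := ε/16 with hl
  have hl0 : 0 ≤ l := by positivity
  have hρ : 0 ≤ ρ := Nat.cast_nonneg _
  set B := Finset.univ.filter (fun S : κ → ι → Bool =>
        (∑ k : κ, (Z x (S k))^2) ≤ ρ*(1-ε)) with hB
  have step1 : (B.card : ℝ) ≤ ∑ S ∈ B, exp (l * (ρ*(1-ε) - ∑ k : κ, (Z x (S k))^2)) := by
    have hcard : (B.card : ℝ) = ∑ _S ∈ B, (1:ℝ) := by simp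
    rw [hcard]
    apply Finset.sum_le_sum
    intro S hS
    rw [hB, Finset.mem_filter] at hS
    have harg : 0 ≤ l * (ρ*(1-ε) - ∑ k : κ, (Z x (S k))^2) := by
      apply mul_nonneg hl0; linarith [hS.2]
    calc (1:ℝ) = exp 0 := by rw [Real.exp_zero]
    _ ≤ _ := Real.exp_le_exp.mpr harg
  have step2 : ∑ S ∈ B, exp (l * (ρ*(1-ε) - ∑ k : κ, (Z x (S k))^2))
      ≤ ∑ S : κ → ι → Bool, exp (l * (ρ*(1-ε) - ∑ k : κ, (Z x (S k))^2)) := by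
    apply Finset.sum_le_sum_of_subset_of_nonneg (Finset.filter_subset _ _)
    intro S _ _; exact (Real.exp_pos _).le
  have step3 : ∑ S : κ → ι → Bool, exp (l * (ρ*(1-ε) - ∑ k : κ, (Z x (S k))^2))
      = exp (l * ρ*(1-ε)) * (∑ s : ι → Bool, exp (-(l * (Z x s)^2))) ^ (Fintype.card κ) := by
    have h1 : ∀ S : κ → ι → Bool, exp (l * (ρ*(1-ε) - ∑ k : κ, (Z x (S k))^2))
        = exp (l * ρ*(1-ε)) * ∏ k : κ, exp (-(l * (Z x (S k))^2)) := by
      intro S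
      rw [← Real.exp_sum, ← Real.exp_add]
      congr 1
      rw [show (∑ k : κ, -(l * (Z x (S k))^2)) = -(l * ∑ k : κ, (Z x (S k))^2) by
        simp [Finset.sum_neg_distrib, ← Finset.mul_sum]]
      ring
    simp_rw [h1]
    rw [← Finset.mul_sum, sum_prod_pow (fun s => exp (-(l * (Z x s)^2)))]
  have step4 : (∑ s : ι → Bool, exp (-(l * (Z x s)^2))) ^ (Fintype.card κ)
      ≤ ((2:ℝ) ^ (Fintype.card ι) * exp (-l + (33/4)*l^2)) ^ (Fintype.card κ) := by
    apply pow_le_pow_left₀ (Finset.sum_nonneg (fun s _ => (Real.exp_pos _).le))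
    exact sum_exp_neg_sq_le x hx hl0
  have step5 : exp (l * ρ*(1-ε)) * ((2:ℝ) ^ (Fintype.card ι) * exp (-l + (33/4)*l^2)) ^ (Fintype.card κ)
      ≤ exp (-(ρ * ε^2)/36) * ((2:ℝ)^(Fintype.card ι))^(Fintype.card κ) := by
    rw [mul_pow, ← Real.exp_nat_mul]
    rw [mul_comm (exp (l * ρ*(1-ε))), mul_assoc, ← Real.exp_add,
        mul_comm (exp (-(ρ * ε^2)/36))]
    apply mul_le_mul_of_nonneg_left _ (by positivity)
    apply Real.exp_le_exp.mpr
    have hρdef : (Fintype.card κ : ℝ) = ρ := rfl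
    rw [hρdef, hl]
    nlinarith [hρ, sq_nonneg ε, mul_nonneg hρ (sq_nonneg ε), mul_nonneg (mul_nonneg hρ (sq_nonneg ε)) hε0.le]
  calc (B.card : ℝ) ≤ _ := step1
  _ ≤ _ := step2
  _ = _ := step3
  _ ≤ exp (l * ρ*(1-ε)) * ((2:ℝ) ^ (Fintype.card ι) * exp (-l + (33/4)*l^2)) ^ (Fintype.card κ) := by
      apply mul_le_mul_of_nonneg_left step4 (Real.exp_pos _).le
  _ ≤ _ := step5

/-- Two-sided tail bound for arbitrary (not necessarily unit) vectors. -/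
theorem tail_bound (x : ι → ℝ) {ε : ℝ} (hε0 : 0 < ε) (hε1 : ε < 1) :
    ((Finset.univ.filter (fun S : κ → ι → Bool =>
        ε * (Fintype.card κ : ℝ) * (∑ i, x i^2) <
          |(∑ k : κ, (Z x (S k))^2) - (Fintype.card κ : ℝ) * ∑ i, x i^2|)).card : ℝ)
      ≤ 2 * exp (-((Fintype.card κ : ℝ) * ε^2)/36) * ((2:ℝ)^(Fintype.card ι))^(Fintype.card κ) := by
  set ρ := (Fintype.card κ : ℝ)
  by_cases hx0 : ∑ i, x i^2 = 0
  · have hxz : ∀ i, x i = 0 := by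
      intro i
      have := Finset.sum_eq_zero_iff_of_nonneg (fun j (_ : j ∈ Finset.univ) => sq_nonneg (x j))
      exact pow_eq_zero_iff (n := 2) (by norm_num) |>.mp (this.mp hx0 i (Finset.mem_univ i))
    have hZ : ∀ s : ι → Bool, Z x s = 0 := by
      intro s; unfold Z; simp [hxz]
    have hempty : (Finset.univ.filter (fun S : κ → ι → Bool =>
        ε * ρ * (∑ i, x i^2) < |(∑ k : κ, (Z x (S k))^2) - ρ * ∑ i, x i^2|)) = ∅ := by
      apply Finset.filter_eq_empty_iff.mpr
      intro S _
      simp [hZ, hx0]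
    rw [hempty]
    simp
    positivity
  · -- normalize
    have hq : 0 < ∑ i, x i^2 := lt_of_le_of_ne (Finset.sum_nonneg fun i _ => sq_nonneg _) (Ne.symm hx0)
    set q := ∑ i, x i^2 with hqdef
    set y : ι → ℝ := fun i => x i / Real.sqrt q with hy
    have hsq : Real.sqrt q ^ 2 = q := Real.sq_sqrt hq.le
    have hsqpos : 0 < Real.sqrt q := Real.sqrt_pos.mpr hq
    have hyunit : ∑ i, y i^2 = 1 := by
      simp_rw [hy, div_pow, hsq]
      rw [← Finset.sum_div, ← hqdef, div_self hx0]
    have hZy : ∀ s : ι → Bool, (Z x s)^2 = q * (Z y s)^2 := by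
      intro s
      have : Z y s = Z x s / Real.sqrt q := by
        unfold Z
        rw [Finset.sum_div]
        refine Finset.sum_congr rfl fun i _ => ?_
        rw [hy]; ring
      rw [this, div_pow, hsq]
      field_simp
    have hsubset : (Finset.univ.filter (fun S : κ → ι → Bool =>
        ε * ρ * q < |(∑ k : κ, (Z x (S k))^2) - ρ * q|)) ⊆
        (Finset.univ.filter (fun S : κ → ι → Bool =>
          ρ*(1+ε) ≤ ∑ k : κ, (Z y (S k))^2)) ∪
        (Finset.univ.filter (fun S : κ → ι → Bool =>
          (∑ k : κ, (Z y (S k))^2) ≤ ρ*(1-ε))) := by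
      intro S hS
      rw [Finset.mem_filter] at hS
      have h2 : (∑ k : κ, (Z x (S k))^2) = q * ∑ k : κ, (Z y (S k))^2 := by
        rw [Finset.mul_sum]; exact Finset.sum_congr rfl fun k _ => hZy (S k)
      rw [h2] at hS
      have h3 := hS.2
      rw [Finset.mem_union, Finset.mem_filter, Finset.mem_filter]
      have h4 : ε * ρ < |(∑ k : κ, (Z y (S k))^2) - ρ| := by
        have habs : |q * (∑ k : κ, (Z y (S k))^2) - ρ * q| =
            q * |(∑ k : κ, (Z y (S k))^2) - ρ| := by
          rw [show q * (∑ k : κ, (Z y (S k))^2) - ρ * q =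
              q * ((∑ k : κ, (Z y (S k))^2) - ρ) by ring, abs_mul, abs_of_pos hq]
        rw [habs] at h3
        have := (mul_lt_mul_iff_right₀ hq).mp (by linarith [h3] : q * (ε * ρ) < q * |(∑ k : κ, (Z y (S k))^2) - ρ|)
        linarith
      rcases lt_abs.mp h4 with h5 | h5
      · left; exact ⟨Finset.mem_univ S, by linarith⟩
      · right; exact ⟨Finset.mem_univ S, by linarith⟩
    have hub := chernoff_upper (κ := κ) y hyunit hε0 hε1
    have hlb := chernoff_lower (κ := κ) y hyunit hε0 hε1
    have hcard := Finset.card_le_card hsubset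
    have hcard2 := Finset.card_union_le
      (Finset.univ.filter (fun S : κ → ι → Bool => ρ*(1+ε) ≤ ∑ k : κ, (Z y (S k))^2))
      (Finset.univ.filter (fun S : κ → ι → Bool => (∑ k : κ, (Z y (S k))^2) ≤ ρ*(1-ε)))
    have hfin : ((Finset.univ.filter (fun S : κ → ι → Bool =>
        ε * ρ * q < |(∑ k : κ, (Z x (S k))^2) - ρ * q|)).card : ℝ)
        ≤ ((Finset.univ.filter (fun S : κ → ι → Bool =>
            ρ*(1+ε) ≤ ∑ k : κ, (Z y (S k))^2)).card : ℝ) +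
          ((Finset.univ.filter (fun S : κ → ι → Bool =>
            (∑ k : κ, (Z y (S k))^2) ≤ ρ*(1-ε))).card : ℝ) := by
      have := le_trans hcard hcard2
      exact_mod_cast this
    calc ((Finset.univ.filter (fun S : κ → ι → Bool =>
        ε * ρ * q < |(∑ k : κ, (Z x (S k))^2) - ρ * q|)).card : ℝ)
        ≤ _ + _ := hfin
      _ ≤ exp (-(ρ * ε^2)/36) * ((2:ℝ)^(Fintype.card ι))^(Fintype.card κ)
          + exp (-(ρ * ε^2)/36) * ((2:ℝ)^(Fintype.card ι))^(Fintype.card κ) := add_le_add hub hlb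
      _ = 2 * exp (-(ρ * ε^2)/36) * ((2:ℝ)^(Fintype.card ι))^(Fintype.card κ) := by ring


theorem exists_good_signs {Idx : Type*} [Fintype Idx] [DecidableEq Idx] (v : Idx → (ι → ℝ)) {ε : ℝ}
    (hε0 : 0 < ε) (hε1 : ε < 1)
    (hsmall : 2 * (Fintype.card Idx : ℝ) * exp (-((Fintype.card κ : ℝ) * ε^2)/36) < 1) :
    ∃ S : κ → ι → Bool, ∀ p : Idx,
      |(∑ k : κ, (Z (v p) (S k))^2) - (Fintype.card κ : ℝ) * ∑ i, (v p) i^2|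
        ≤ ε * (Fintype.card κ : ℝ) * ∑ i, (v p) i^2 := by
  by_contra hcon
  push_neg at hcon
  have hcover : (Finset.univ : Finset (κ → ι → Bool)) ⊆
      Finset.univ.biUnion (fun p : Idx => Finset.univ.filter (fun S : κ → ι → Bool =>
        ε * (Fintype.card κ : ℝ) * (∑ i, (v p) i^2) <
          |(∑ k : κ, (Z (v p) (S k))^2) - (Fintype.card κ : ℝ) * ∑ i, (v p) i^2|)) := by
    intro S _
    obtain ⟨p, hp⟩ := hcon S
    exact Finset.mem_biUnion.mpr ⟨p, Finset.mem_univ p,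
      Finset.mem_filter.mpr ⟨Finset.mem_univ S, hp⟩⟩
  have h1 := Finset.card_le_card hcover
  have h2 := Finset.card_biUnion_le (s := (Finset.univ : Finset Idx))
    (t := fun p : Idx => Finset.univ.filter (fun S : κ → ι → Bool =>
        ε * (Fintype.card κ : ℝ) * (∑ i, (v p) i^2) <
          |(∑ k : κ, (Z (v p) (S k))^2) - (Fintype.card κ : ℝ) * ∑ i, (v p) i^2|))
  have h3 : ((Finset.univ : Finset (κ → ι → Bool)).card : ℝ)
      ≤ ∑ p : Idx, ((Finset.univ.filter (fun S : κ → ι → Bool =>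
        ε * (Fintype.card κ : ℝ) * (∑ i, (v p) i^2) <
          |(∑ k : κ, (Z (v p) (S k))^2) - (Fintype.card κ : ℝ) * ∑ i, (v p) i^2|)).card : ℝ) := by
    have := le_trans h1 h2
    exact_mod_cast this
  have h4 : ∑ p : Idx, ((Finset.univ.filter (fun S : κ → ι → Bool =>
        ε * (Fintype.card κ : ℝ) * (∑ i, (v p) i^2) <
          |(∑ k : κ, (Z (v p) (S k))^2) - (Fintype.card κ : ℝ) * ∑ i, (v p) i^2|)).card : ℝ)
      ≤ (Fintype.card Idx : ℝ) *
        (2 * exp (-((Fintype.card κ : ℝ) * ε^2)/36) * ((2:ℝ)^(Fintype.card ι))^(Fintype.card κ)) := by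
    calc _ ≤ ∑ _p : Idx,
        (2 * exp (-((Fintype.card κ : ℝ) * ε^2)/36) * ((2:ℝ)^(Fintype.card ι))^(Fintype.card κ)) :=
          Finset.sum_le_sum (fun p _ => tail_bound (κ := κ) (v p) hε0 hε1)
      _ = _ := by rw [Finset.sum_const, Finset.card_univ, nsmul_eq_mul]
  have h5 : ((Finset.univ : Finset (κ → ι → Bool)).card : ℝ)
      = ((2:ℝ)^(Fintype.card ι))^(Fintype.card κ) := by
    rw [Finset.card_univ]; exact card_fun_bool
  have hpow : (0:ℝ) < ((2:ℝ)^(Fintype.card ι))^(Fintype.card κ) := by positivity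
  nlinarith [h3, h4, h5, hsmall, hpow]


theorem bilinear_le (n : ℕ) (X : Matrix (Fin n) (Fin n) ℝ) (u w : Fin n → ℝ) :
    u ⬝ᵥ X.mulVec w ≤ matrixSpectralNorm n X * Real.sqrt (∑ i, u i^2) * Real.sqrt (∑ i, w i^2) := by
  set u' : EuclideanSpace ℝ (Fin n) := (WithLp.equiv 2 _).symm u with hu'
  set w' : EuclideanSpace ℝ (Fin n) := (WithLp.equiv 2 _).symm w with hw'
  have hz : Matrix.toEuclideanCLM (𝕜 := ℝ) X w' = (WithLp.equiv 2 _).symm (X.mulVec w) := by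
    simp only [hw', WithLp.equiv_symm_apply, Matrix.toEuclideanCLM_toLp]
  have hinner : u ⬝ᵥ X.mulVec w = inner (𝕜 := ℝ) u' (Matrix.toEuclideanCLM (𝕜 := ℝ) X w') := by
    rw [hz]
    simp only [PiLp.inner_apply, RCLike.inner_apply, conj_trivial, hu']
    simp [dotProduct, WithLp.equiv_symm_apply, mul_comm]
  have h1 : inner (𝕜 := ℝ) u' (Matrix.toEuclideanCLM (𝕜 := ℝ) X w')
      ≤ ‖u'‖ * ‖Matrix.toEuclideanCLM (𝕜 := ℝ) X w'‖ := real_inner_le_norm _ _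
  have h2 : ‖Matrix.toEuclideanCLM (𝕜 := ℝ) X w'‖ ≤ matrixSpectralNorm n X * ‖w'‖ :=
    (Matrix.toEuclideanCLM (𝕜 := ℝ) X).le_opNorm w'
  have hnu : ‖u'‖ = Real.sqrt (∑ i, u i^2) := by
    rw [EuclideanSpace.norm_eq]
    congr 1
    exact Finset.sum_congr rfl fun i _ => by
      rw [hu', WithLp.equiv_symm_apply, PiLp.toLp_apply]; rw [Real.norm_eq_abs, sq_abs]
  have hnw : ‖w'‖ = Real.sqrt (∑ i, w i^2) := by
    rw [EuclideanSpace.norm_eq]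
    congr 1
    exact Finset.sum_congr rfl fun i _ => by
      rw [hw', WithLp.equiv_symm_apply, PiLp.toLp_apply]; rw [Real.norm_eq_abs, sq_abs]
  have hnu0 : 0 ≤ ‖u'‖ := norm_nonneg _
  calc u ⬝ᵥ X.mulVec w = inner (𝕜 := ℝ) u' (Matrix.toEuclideanCLM (𝕜 := ℝ) X w') := hinner
    _ ≤ ‖u'‖ * ‖Matrix.toEuclideanCLM (𝕜 := ℝ) X w'‖ := h1
    _ ≤ ‖u'‖ * (matrixSpectralNorm n X * ‖w'‖) := mul_le_mul_of_nonneg_left h2 hnu0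
    _ = matrixSpectralNorm n X * Real.sqrt (∑ i, u i^2) * Real.sqrt (∑ i, w i^2) := by
        rw [hnu, hnw]; ring


theorem blockPSD (n : ℕ) (X : Matrix (Fin n) (Fin n) ℝ) :
    (matrixSpectralNorm n X • (1 : Matrix (Fin n ⊕ Fin n) (Fin n ⊕ Fin n) ℝ)
      + Matrix.fromBlocks 0 X Xᵀ 0).PosSemidef := by
  set σ := matrixSpectralNorm n X with hσ
  have hσ0 : 0 ≤ σ := norm_nonneg _
  refine Matrix.PosSemidef.of_dotProduct_mulVec_nonneg ?_ ?_
  · -- Hermitian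
    unfold Matrix.IsHermitian
    rw [conjTranspose_eq_transpose_of_trivial, transpose_add, transpose_smul, transpose_one,
      fromBlocks_transpose, transpose_transpose]
    simp
  · intro v
    have hsplit : star v ⬝ᵥ ((σ • (1 : Matrix (Fin n ⊕ Fin n) (Fin n ⊕ Fin n) ℝ)
        + Matrix.fromBlocks 0 X Xᵀ 0).mulVec v)
        = σ * (∑ p, v p^2) + 2 * ((v ∘ Sum.inl) ⬝ᵥ X.mulVec (v ∘ Sum.inr)) := by
      have hstar : star v = v := by simp
      rw [hstar, add_mulVec, dotProduct_add]
      have h1 : v ⬝ᵥ ((σ • (1 : Matrix (Fin n ⊕ Fin n) (Fin n ⊕ Fin n) ℝ)) *ᵥ v)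
          = σ * ∑ p, v p^2 := by
        rw [smul_mulVec, one_mulVec]
        rw [dotProduct_smul]
        simp only [smul_eq_mul]
        congr 1
        simp [dotProduct, sq]
      have h2 : v ⬝ᵥ ((Matrix.fromBlocks 0 X Xᵀ 0) *ᵥ v)
          = 2 * ((v ∘ Sum.inl) ⬝ᵥ X.mulVec (v ∘ Sum.inr)) := by
        rw [fromBlocks_mulVec, zero_mulVec, zero_mulVec, add_zero, zero_add]
        have hv : v ⬝ᵥ Sum.elim (X *ᵥ (v ∘ Sum.inr)) (Xᵀ *ᵥ (v ∘ Sum.inl))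
            = (v ∘ Sum.inl) ⬝ᵥ (X *ᵥ (v ∘ Sum.inr)) + (v ∘ Sum.inr) ⬝ᵥ (Xᵀ *ᵥ (v ∘ Sum.inl)) := by
          simp [dotProduct, Fintype.sum_sum_type]
        rw [hv]
        have ht : (v ∘ Sum.inr) ⬝ᵥ (Xᵀ *ᵥ (v ∘ Sum.inl)) = (v ∘ Sum.inl) ⬝ᵥ (X *ᵥ (v ∘ Sum.inr)) := by
          rw [Matrix.mulVec_transpose, dotProduct_comm, ← Matrix.dotProduct_mulVec]
        rw [ht]; ring
      rw [h1, h2]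
    rw [hsplit]
    set u := v ∘ Sum.inl
    set w := v ∘ Sum.inr
    have hb := bilinear_le n X (-u) w
    have h2 : ∑ p, v p^2 = (∑ i, u i^2) + (∑ i, w i^2) := by
      rw [Fintype.sum_sum_type]; rfl
    have hsu : Real.sqrt (∑ i, u i^2)^2 = ∑ i, u i^2 := Real.sq_sqrt (by positivity)
    have hsw : Real.sqrt (∑ i, w i^2)^2 = ∑ i, w i^2 := Real.sq_sqrt (by positivity)
    have hneg : (-u) ⬝ᵥ X.mulVec w = -(u ⬝ᵥ X.mulVec w) := by
      simp [dotProduct]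
    rw [hneg] at hb
    have hnegsum : ∑ i, (-u) i^2 = ∑ i, u i^2 := by
      apply Finset.sum_congr rfl; intro i _; simp
    rw [hnegsum] at hb
    rw [h2]
    nlinarith [hb, sq_nonneg (Real.sqrt (∑ i, u i^2) - Real.sqrt (∑ i, w i^2)), hsu, hsw, hσ0]


end LowRankAux
open LowRankAux
open scoped MatrixOrder

/-- **Theorem 0.** Any `n × n` real matrix `X` can be approximated, entrywise to within
`ε‖X‖₂`, by a matrix of rank at most `⌈72 log(2n+1)/ε²⌉`. -/
theorem low_rank_max_norm_approx (n : ℕ) (X : Matrix (Fin n) (Fin n) ℝ)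
    (ε : ℝ) (hε0 : 0 < ε) (hε1 : ε < 1)
    (r : ℕ) (hr : r = ⌈72 * Real.log (2 * (n : ℝ) + 1) / ε ^ 2⌉₊) :
    ∃ Y : Matrix (Fin n) (Fin n) ℝ,
      Y.rank ≤ r ∧ ∀ i j, |X i j - Y i j| ≤ ε * matrixSpectralNorm n X := by
  rcases Nat.eq_zero_or_pos n with hn | hn
  · subst hn
    exact ⟨0, by rw [Matrix.rank_zero]; exact Nat.zero_le r, fun i _ => i.elim0⟩
  -- basic setup
  have hσ0 : 0 ≤ matrixSpectralNorm n X := norm_nonneg _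
  set σ := matrixSpectralNorm n X with hσdef
  set L := Real.log (2*(n:ℝ)+1) with hLdef
  have ht0 : (0:ℝ) < 2*(n:ℝ)+1 := by positivity
  have hL0 : 0 < L := Real.log_pos (by
    have : (1:ℝ) ≤ (n:ℝ) := by exact_mod_cast hn
    linarith)
  have hε2 : (0:ℝ) < ε^2 := by positivity
  have hr1 : 0 < r := by
    rw [hr]; exact Nat.ceil_pos.mpr (by positivity)
  have hrpos : (0:ℝ) < (r:ℝ) := by exact_mod_cast hr1
  have hrge : 72 * L ≤ (r:ℝ) * ε^2 := by
    have h1 : 72 * L / ε^2 ≤ (r:ℝ) := by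
      rw [hr]; exact_mod_cast Nat.le_ceil _
    calc 72 * L = (72 * L / ε^2) * ε^2 := by field_simp
    _ ≤ (r:ℝ) * ε^2 := mul_le_mul_of_nonneg_right h1 hε2.le
  -- PSD factorization
  set M := σ • (1 : Matrix (Fin n ⊕ Fin n) (Fin n ⊕ Fin n) ℝ) + Matrix.fromBlocks 0 X Xᵀ 0
    with hMdef
  have hMpsd : M.PosSemidef := blockPSD n X
  set W := CFC.sqrt M with hWdef
  have hWW : W * W = M := CFC.sqrt_mul_sqrt_self M hMpsd.nonneg
  have hWsym : ∀ p q, W p q = W q p := by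
    have h0 : Wᴴ = W := (CFC.sqrt_nonneg M).posSemidef.1
    rw [Matrix.conjTranspose_eq_transpose_of_trivial] at h0
    intro p q
    conv_rhs => rw [← h0, Matrix.transpose_apply]
  have hfac : ∀ p q, M p q = ∑ k, W k p * W k q := by
    intro p q
    rw [← hWW, Matrix.mul_apply]
    exact Finset.sum_congr rfl fun k _ => by rw [hWsym p k]
  set a : Fin n → (Fin n ⊕ Fin n) → ℝ := fun i l => W l (Sum.inl i) with hadef
  set b : Fin n → (Fin n ⊕ Fin n) → ℝ := fun j l => W l (Sum.inr j) with hbdef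
  have hab : ∀ i j, ∑ l, a i l * b j l = X i j := by
    intro i j
    rw [show (∑ l, a i l * b j l) = M (Sum.inl i) (Sum.inr j) from (hfac _ _).symm]
    rw [hMdef]
    simp [Matrix.one_apply]
  have haa : ∀ i, ∑ l, (a i l)^2 = σ := by
    intro i
    have h1 : ∑ l, a i l * a i l = M (Sum.inl i) (Sum.inl i) := (hfac _ _).symm
    simp_rw [← sq] at h1
    rw [h1, hMdef]
    simp [Matrix.one_apply]
  have hbb : ∀ j, ∑ l, (b j l)^2 = σ := by
    intro j
    have h1 : ∑ l, b j l * b j l = M (Sum.inr j) (Sum.inr j) := (hfac _ _).symm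
    simp_rw [← sq] at h1
    rw [h1, hMdef]
    simp [Matrix.one_apply]
  -- the random projection
  set v : Fin n × Fin n × Bool → (Fin n ⊕ Fin n) → ℝ :=
    fun p => if p.2.2 then a p.1 + b p.2.1 else a p.1 - b p.2.1 with hvdef
  have hsmall : 2 * (Fintype.card (Fin n × Fin n × Bool) : ℝ)
      * exp (-((Fintype.card (Fin r) : ℝ) * ε^2)/36) < 1 := by
    have hcard : (Fintype.card (Fin n × Fin n × Bool) : ℝ) = 2 * (n:ℝ)^2 := by
      simp [Fintype.card_prod]
      push_cast; ring
    rw [hcard]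
    simp only [Fintype.card_fin]
    have he1 : exp (-((r:ℝ)*ε^2)/36) ≤ 1/(2*(n:ℝ)+1)^2 := by
      have h2 : -((r:ℝ)*ε^2)/36 ≤ -(2*L) := by linarith
      have h3 : exp (-(2*L)) = 1/(2*(n:ℝ)+1)^2 := by
        rw [Real.exp_neg, show (2:ℝ)*L = L + L by ring, Real.exp_add, Real.exp_log ht0]
        rw [one_div, sq]
      calc exp (-((r:ℝ)*ε^2)/36) ≤ exp (-(2*L)) := Real.exp_le_exp.mpr h2
      _ = 1/(2*(n:ℝ)+1)^2 := h3
    have hn1 : (1:ℝ) ≤ (n:ℝ) := by exact_mod_cast hn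
    have key : 2 * (2*(n:ℝ)^2) * (1/(2*(n:ℝ)+1)^2) < 1 := by
      have hpos : (0:ℝ) < (2*(n:ℝ)+1)^2 := by positivity
      rw [mul_one_div, div_lt_one hpos]
      nlinarith
    calc 2 * (2*(n:ℝ)^2) * exp (-((r:ℝ)*ε^2)/36)
        ≤ 2 * (2*(n:ℝ)^2) * (1/(2*(n:ℝ)+1)^2) := by
          apply mul_le_mul_of_nonneg_left he1 (by positivity)
      _ < 1 := key
  obtain ⟨S, hS⟩ := exists_good_signs (κ := Fin r) v hε0 hε1 hsmall
  -- build Y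
  set P : Matrix (Fin r) (Fin n ⊕ Fin n) ℝ := fun k l => LowRankAux.sgn (S k l) with hPdef
  set A : Matrix (Fin n ⊕ Fin n) (Fin n) ℝ := fun l i => a i l with hAdef
  set B : Matrix (Fin n ⊕ Fin n) (Fin n) ℝ := fun l j => b j l with hBdef
  set Y := ((r:ℝ)⁻¹ • (P * A)ᵀ) * (P * B) with hYdef
  refine ⟨Y, ?_, ?_⟩
  · calc Y.rank ≤ ((r:ℝ)⁻¹ • (P * A)ᵀ).rank := Matrix.rank_mul_le_left _ _
    _ ≤ Fintype.card (Fin r) := Matrix.rank_le_card_width _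
    _ = r := Fintype.card_fin r
  · intro i j
    have hPA : ∀ k i', (P * A) k i' = Z (a i') (S k) := by
      intro k i'
      rw [Matrix.mul_apply]
      rfl
    have hPB : ∀ k j', (P * B) k j' = Z (b j') (S k) := by
      intro k j'
      rw [Matrix.mul_apply]
      rfl
    have hY : Y i j = (r:ℝ)⁻¹ * ∑ k, Z (a i) (S k) * Z (b j) (S k) := by
      rw [hYdef, Matrix.mul_apply, Finset.mul_sum]
      refine Finset.sum_congr rfl fun k _ => ?_
      rw [Matrix.smul_apply, Matrix.transpose_apply, hPA, hPB, smul_eq_mul]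
      ring
    set u : (Fin n ⊕ Fin n) → ℝ := a i + b j with hudef
    set w : (Fin n ⊕ Fin n) → ℝ := a i - b j with hwdef
    have hu2 : ∑ l, u l^2 = 2*σ + 2*(X i j) := by
      have : ∀ l, u l^2 = (a i l)^2 + 2*(a i l * b j l) + (b j l)^2 := by
        intro l; rw [hudef]; simp [Pi.add_apply]; ring
      simp_rw [this]
      rw [Finset.sum_add_distrib, Finset.sum_add_distrib, haa, hbb, ← Finset.mul_sum, hab]
      ring
    have hw2 : ∑ l, w l^2 = 2*σ - 2*(X i j) := by
      have : ∀ l, w l^2 = (a i l)^2 - 2*(a i l * b j l) + (b j l)^2 := by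
        intro l; rw [hwdef]; simp [Pi.sub_apply]; ring
      simp_rw [this]
      rw [Finset.sum_add_distrib, Finset.sum_sub_distrib, haa, hbb, ← Finset.mul_sum, hab]
      ring
    have hgu := hS (i, j, true)
    have hgw := hS (i, j, false)
    have hvu : v (i, j, true) = u := rfl
    have hvw : v (i, j, false) = w := rfl
    rw [hvu] at hgu
    rw [hvw] at hgw
    simp only [Fintype.card_fin] at hgu hgw
    set Tu := ∑ k, (Z u (S k))^2 with hTudef
    set Tw := ∑ k, (Z w (S k))^2 with hTwdef
    -- polarization
    have hpol : Y i j = (Tu - Tw)/(4*(r:ℝ)) := by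
      rw [hY, hTudef, hTwdef]
      rw [← Finset.sum_sub_distrib]
      have : ∀ k, (Z u (S k))^2 - (Z w (S k))^2 = 4 * (Z (a i) (S k) * Z (b j) (S k)) := by
        intro k
        rw [hudef, hwdef, Z_add, Z_sub]
        ring
      simp_rw [this]
      rw [← Finset.mul_sum]
      field_simp
    have hXij : X i j = ((∑ l, u l^2) - ∑ l, w l^2)/4 := by
      rw [hu2, hw2]; ring
    have h1 : |(∑ l, u l^2) - Tu/(r:ℝ)| ≤ ε * ∑ l, u l^2 := by
      have heq : |(∑ l, u l^2) - Tu/(r:ℝ)| * (r:ℝ) = |Tu - (r:ℝ) * ∑ l, u l^2| := by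
        rw [← abs_of_pos hrpos, ← abs_mul]
        rw [abs_of_pos hrpos]
        rw [← abs_neg]
        congr 1
        field_simp
        ring
      have h2 : |Tu - (r:ℝ) * ∑ l, u l^2| ≤ ε * (r:ℝ) * ∑ l, u l^2 := hgu
      have h3 : |(∑ l, u l^2) - Tu/(r:ℝ)| * (r:ℝ) ≤ (ε * ∑ l, u l^2) * (r:ℝ) := by
        rw [heq]; calc |Tu - (r:ℝ) * ∑ l, u l^2| ≤ ε * (r:ℝ) * ∑ l, u l^2 := h2
        _ = (ε * ∑ l, u l^2) * (r:ℝ) := by ring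
      exact le_of_mul_le_mul_right h3 hrpos
    have h1w : |(∑ l, w l^2) - Tw/(r:ℝ)| ≤ ε * ∑ l, w l^2 := by
      have heq : |(∑ l, w l^2) - Tw/(r:ℝ)| * (r:ℝ) = |Tw - (r:ℝ) * ∑ l, w l^2| := by
        rw [← abs_of_pos hrpos, ← abs_mul]
        rw [abs_of_pos hrpos]
        rw [← abs_neg]
        congr 1
        field_simp
        ring
      have h2 : |Tw - (r:ℝ) * ∑ l, w l^2| ≤ ε * (r:ℝ) * ∑ l, w l^2 := hgw
      have h3 : |(∑ l, w l^2) - Tw/(r:ℝ)| * (r:ℝ) ≤ (ε * ∑ l, w l^2) * (r:ℝ) := by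
        rw [heq]; calc |Tw - (r:ℝ) * ∑ l, w l^2| ≤ ε * (r:ℝ) * ∑ l, w l^2 := h2
        _ = (ε * ∑ l, w l^2) * (r:ℝ) := by ring
      exact le_of_mul_le_mul_right h3 hrpos
    have hdiff : X i j - Y i j
        = (((∑ l, u l^2) - Tu/(r:ℝ)) - ((∑ l, w l^2) - Tw/(r:ℝ)))/4 := by
      rw [hXij, hpol]
      field_simp
      ring
    rw [hdiff, abs_div]
    rw [show |(4:ℝ)| = 4 by norm_num]
    have htri : |((∑ l, u l^2) - Tu/(r:ℝ)) - ((∑ l, w l^2) - Tw/(r:ℝ))|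
        ≤ |(∑ l, u l^2) - Tu/(r:ℝ)| + |(∑ l, w l^2) - Tw/(r:ℝ)| := abs_sub _ _
    have hsum : ε * (∑ l, u l^2) + ε * (∑ l, w l^2) = 4 * (ε * σ) := by
      rw [hu2, hw2]; ring
    linarith [htri, h1, h1w]
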